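/- Secret protection is a relaxation of GDP at a single point: there exist pairs of probability distributions (P, Q) on ℝ and parameters 0 < p < r < 1 with B_{(P,Q)}(p) ≤ r (so the pair meets the (p,r)-secret-protection constraint at prior p), yet T_{(P,Q)}(α) < G_μ(α) for some α ∈ (0,1), where μ = Φ^{-1}(1-p) - Φ^{-1}(1-r). That is, controlling the blow-up function at one prior does not imply domination of the entire Gaussian trade-off curve. -/

import Mathlib

open MeasureTheory ProbabilityTheory Set

/-- Standard normal CDF. -/
noncomputable def Phi : ℝ → ℝ := fun x => ProbabilityTheory.cdf (gaussianReal 0 1) x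

/-- Inverse of the standard normal CDF. -/
noncomputable def PhiInv : ℝ → ℝ := Function.invFun Phi

/-- Gaussian trade-off function `G_μ(α) = Φ(Φ⁻¹(1-α) - μ)`. -/
noncomputable def Gmu (μ α : ℝ) : ℝ := Phi (PhiInv (1 - α) - μ)

/-- Trade-off function `T_{(P,Q)}(α) = inf {P(Eᶜ) : Q(E) ≤ α}`. -/
noncomputable def tradeOff {Ω : Type*} [MeasurableSpace Ω] (P Q : Measure Ω) (α : ℝ) : ℝ :=
  sInf {x : ℝ | ∃ E : Set Ω, MeasurableSet E ∧ (Q E).toReal ≤ α ∧ x = (P Eᶜ).toReal}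

/-- Blow-up function `B_{(P,Q)}(α) = sup {P(E) : Q(E) ≤ α}`. -/
noncomputable def blowUp {Ω : Type*} [MeasurableSpace Ω] (P Q : Measure Ω) (α : ℝ) : ℝ :=
  sSup {x : ℝ | ∃ E : Set Ω, MeasurableSet E ∧ (Q E).toReal ≤ α ∧ x = (P E).toReal}

open scoped ENNReal NNReal

lemma Phi_eq_integral (x : ℝ) :
    Phi x = ∫ t in Iic x, gaussianPDFReal 0 1 t := by
  rw [Phi, cdf_eq_real, measureReal_def, gaussianReal_apply_eq_integral 0 one_ne_zero,
    ENNReal.toReal_ofReal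
      (setIntegral_nonneg measurableSet_Iic fun t _ => gaussianPDFReal_nonneg 0 1 t)]

lemma Phi_strictMono : StrictMono Phi := by
  intro a b hab
  have hint := integrable_gaussianPDFReal 0 1
  have key := intervalIntegral.integral_Iic_sub_Iic
    (hint.integrableOn (s := Iic a)) (hint.integrableOn (s := Iic b))
  have hpos : 0 < ∫ t in a..b, gaussianPDFReal 0 1 t :=
    intervalIntegral.intervalIntegral_pos_of_pos (hint.intervalIntegrable)
      (fun x => gaussianPDFReal_pos 0 1 x one_ne_zero) hab
  rw [Phi_eq_integral, Phi_eq_integral]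
  linarith

lemma Phi_continuous : Continuous Phi := by
  have hint := integrable_gaussianPDFReal 0 1
  have h := hint.continuous_primitive 0
  have heq : Phi = fun b => (∫ t in (0:ℝ)..b, gaussianPDFReal 0 1 t) +
      ∫ t in Iic (0:ℝ), gaussianPDFReal 0 1 t := by
    funext b
    have key := intervalIntegral.integral_Iic_sub_Iic
      (hint.integrableOn (s := Iic 0)) (hint.integrableOn (s := Iic b))
    rw [Phi_eq_integral]
    linarith
  rw [heq]
  exact h.add continuous_const

lemma Phi_surj {y : ℝ} (h0 : 0 < y) (h1 : y < 1) : ∃ x, Phi x = y := by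
  have hb : Filter.Tendsto Phi Filter.atBot (nhds 0) := tendsto_cdf_atBot (gaussianReal 0 1)
  have ht : Filter.Tendsto Phi Filter.atTop (nhds 1) := tendsto_cdf_atTop (gaussianReal 0 1)
  obtain ⟨a, ha⟩ := (hb.eventually_lt_const h0).exists
  obtain ⟨b, hbb⟩ := (ht.eventually_const_lt h1).exists
  have hab : a ≤ b := by
    by_contra h
    exact absurd (Phi_strictMono.monotone (le_of_not_ge h)) (by linarith)
  have := intermediate_value_Icc hab Phi_continuous.continuousOn
    (mem_Icc.mpr ⟨le_of_lt ha, le_of_lt hbb⟩)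
  obtain ⟨x, _, hx⟩ := this
  exact ⟨x, hx⟩

lemma Phi_PhiInv {y : ℝ} (h0 : 0 < y) (h1 : y < 1) : Phi (PhiInv y) = y :=
  Function.invFun_eq (Phi_surj h0 h1)

lemma PhiInv_lt {y z : ℝ} (h0 : 0 < y) (hyz : y < z) (h1 : z < 1) : PhiInv y < PhiInv z := by
  by_contra h
  have := Phi_strictMono.monotone (le_of_not_gt h)
  rw [Phi_PhiInv h0 (hyz.trans h1), Phi_PhiInv (h0.trans hyz) h1] at this
  linarith

noncomputable def Pmeas : Measure ℝ :=
  (3/4 : ℝ≥0∞) • Measure.dirac (1:ℝ) + (1/4 : ℝ≥0∞) • Measure.dirac (0:ℝ)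

lemma Pmeas_apply (E : Set ℝ) :
    Pmeas E = 3/4 * Measure.dirac (1:ℝ) E + 1/4 * Measure.dirac (0:ℝ) E := by
  rw [Pmeas, Measure.add_apply, Measure.smul_apply, Measure.smul_apply, smul_eq_mul, smul_eq_mul]

instance Pmeas_prob : IsProbabilityMeasure Pmeas := by
  constructor
  rw [Pmeas_apply]
  simp only [measure_univ, mul_one]
  rw [ENNReal.div_add_div_same, show (3:ℝ≥0∞)+1 = 4 by norm_num]
  exact ENNReal.div_self (by norm_num) (by norm_num)

theorem stmt13 :
    ∃ (P Q : Measure ℝ), IsProbabilityMeasure P ∧ IsProbabilityMeasure Q ∧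
      ∃ p r : ℝ, 0 < p ∧ p < r ∧ r < 1 ∧
        blowUp P Q p ≤ r ∧
        ∃ α ∈ Ioo (0:ℝ) 1,
          tradeOff P Q α < Gmu (PhiInv (1 - p) - PhiInv (1 - r)) α := by
  refine ⟨Pmeas, Measure.dirac 0, Pmeas_prob, inferInstance, 1/2, 3/4,
    by norm_num, by norm_num, by norm_num, ?_, 1/4, ⟨by norm_num, by norm_num⟩, ?_⟩
  · -- blowUp bound
    apply Real.sSup_le _ (by norm_num)
    rintro x ⟨E, hE, hQE, rfl⟩
    have h0E : (0:ℝ) ∉ E := by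
      intro h
      rw [Measure.dirac_apply' _ hE, Set.indicator_of_mem h] at hQE
      norm_num at hQE
    have hle : Pmeas E ≤ (3/4 : ℝ≥0∞) := by
      rw [Pmeas_apply, Measure.dirac_apply' (0:ℝ) hE, Set.indicator_of_notMem h0E]
      simp only [mul_zero, add_zero]
      calc (3/4 : ℝ≥0∞) * Measure.dirac (1:ℝ) E ≤ (3/4 : ℝ≥0∞) * 1 :=
            mul_le_mul_right prob_le_one _
        _ = 3/4 := mul_one _
    calc (Pmeas E).toReal ≤ ((3/4 : ℝ≥0∞)).toReal :=
          ENNReal.toReal_mono (ENNReal.div_lt_top (by norm_num) (by norm_num)).ne hle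
      _ = 3/4 := by norm_num
  · -- tradeOff < Gmu
    have hQ1 : ((Measure.dirac (0:ℝ)) ({(1:ℝ)})).toReal ≤ (1/4 : ℝ) := by
      rw [Measure.dirac_apply' _ (measurableSet_singleton 1),
        Set.indicator_of_notMem (by norm_num : (0:ℝ) ∉ ({1} : Set ℝ))]
      norm_num
    have hPc : (Pmeas (({(1:ℝ)} : Set ℝ)ᶜ)).toReal = 1/4 := by
      rw [Pmeas_apply,
        Measure.dirac_apply' (1:ℝ) (measurableSet_singleton (1:ℝ)).compl,
        Measure.dirac_apply' (0:ℝ) (measurableSet_singleton (1:ℝ)).compl,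
        Set.indicator_of_notMem (by simp : (1:ℝ) ∉ (({1} : Set ℝ)ᶜ)),
        Set.indicator_of_mem (by norm_num : (0:ℝ) ∈ (({1} : Set ℝ)ᶜ))]
      simp only [mul_zero, zero_add, Pi.one_apply, mul_one]
      norm_num
    have hmem : (1/4 : ℝ) ∈ {x : ℝ | ∃ E : Set ℝ, MeasurableSet E ∧
        ((Measure.dirac (0:ℝ)) E).toReal ≤ (1/4 : ℝ) ∧ x = (Pmeas Eᶜ).toReal} :=
      ⟨{1}, measurableSet_singleton 1, hQ1, hPc.symm⟩
    have hbdd : BddBelow {x : ℝ | ∃ E : Set ℝ, MeasurableSet E ∧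
        ((Measure.dirac (0:ℝ)) E).toReal ≤ (1/4 : ℝ) ∧ x = (Pmeas Eᶜ).toReal} := by
      refine ⟨0, ?_⟩
      rintro x ⟨E, _, _, rfl⟩
      exact ENNReal.toReal_nonneg
    have hT : tradeOff Pmeas (Measure.dirac 0) (1/4) ≤ 1/4 := csInf_le hbdd hmem
    have hGmu : (1/4 : ℝ) < Gmu (PhiInv (1 - 1/2) - PhiInv (1 - 3/4)) (1/4) := by
      rw [Gmu]
      have h34 : (1:ℝ) - 1/4 = 3/4 := by norm_num
      have h12 : (1:ℝ) - 1/2 = 1/2 := by norm_num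
      have h14 : (1:ℝ) - 3/4 = 1/4 := by norm_num
      rw [h34, h12, h14]
      have hlt : PhiInv (1/2) < PhiInv (3/4) := PhiInv_lt (by norm_num) (by norm_num) (by norm_num)
      have harg : PhiInv (1/4) < PhiInv (3/4) - (PhiInv (1/2) - PhiInv (1/4)) := by linarith
      have := Phi_strictMono harg
      rw [Phi_PhiInv (by norm_num) (by norm_num)] at this
      linarith
    exact lt_of_le_of_lt hT hGmu
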